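/- arXiv:2310.02198 — 2 statements merged into one kernel-verified Lean document; each statement's English description precedes it below -/
import Mathlib

section
/- There is no convex 1-dimensional geometric interpretation η assigning nonempty intervals η(A), η(B), η(C) ⊆ ℝ to three concept names such that all pairwise intersections η(A) ∩ η(B), η(B) ∩ η(C), η(A) ∩ η(C) and the triple intersection η(A) ∩ η(B) ∩ η(C) are nonempty, while simultaneously each of η(A) \ (η(B) ∪ η(C)), η(B) \ (η(A) ∪ η(C)), and η(C) \ (η(A) ∪ η(B)) is nonempty. -/
theorem no_convex_one_dim_faithful :
    ¬ ∃ A B C : Set ℝ,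
      Convex ℝ A ∧ Convex ℝ B ∧ Convex ℝ C ∧
      A.Nonempty ∧ B.Nonempty ∧ C.Nonempty ∧
      (A ∩ B).Nonempty ∧ (B ∩ C).Nonempty ∧ (A ∩ C).Nonempty ∧
      (A ∩ B ∩ C).Nonempty ∧
      (A \ (B ∪ C)).Nonempty ∧
      (B \ (A ∪ C)).Nonempty ∧
      (C \ (A ∪ B)).Nonempty := by
  rintro ⟨A, B, C, hA, hB, hC, -, -, -, -, -, -,
    ⟨p, ⟨⟨hpA, hpB⟩, hpC⟩⟩, ⟨a, haA, ha⟩, ⟨b, hbB, hb⟩, ⟨c, hcC, hc⟩⟩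
  simp only [Set.mem_union, not_or] at ha hb hc
  obtain ⟨haB, haC⟩ := ha
  obtain ⟨hbA, hbC⟩ := hb
  obtain ⟨hcA, hcB⟩ := hc
  have H : ∀ {S T : Set ℝ} {x y : ℝ}, Convex ℝ S → Convex ℝ T →
      x ∈ S → y ∈ T → p ∈ S → p ∈ T → x ≤ p → y ≤ p → x ∈ T ∨ y ∈ S := by
    intro S T x y hS hT hx hy hpS hpT hxp hyp
    rcases le_total x y with h | h
    · exact Or.inr (hS.ordConnected.out hx hpS ⟨h, hyp⟩)
    · exact Or.inl (hT.ordConnected.out hy hpT ⟨h, hxp⟩)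
  have H' : ∀ {S T : Set ℝ} {x y : ℝ}, Convex ℝ S → Convex ℝ T →
      x ∈ S → y ∈ T → p ∈ S → p ∈ T → p ≤ x → p ≤ y → x ∈ T ∨ y ∈ S := by
    intro S T x y hS hT hx hy hpS hpT hxp hyp
    rcases le_total x y with h | h
    · exact Or.inl (hT.ordConnected.out hpT hy ⟨hxp, h⟩)
    · exact Or.inr (hS.ordConnected.out hpS hx ⟨hyp, h⟩)
  rcases le_total a p with hap | hap <;> rcases le_total b p with hbp | hbp <;>
    rcases le_total c p with hcp | hcp
  · rcases H hA hB haA hbB hpA hpB hap hbp with h | h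
    exacts [haB h, hbA h]
  · rcases H hA hB haA hbB hpA hpB hap hbp with h | h
    exacts [haB h, hbA h]
  · rcases H hA hC haA hcC hpA hpC hap hcp with h | h
    exacts [haC h, hcA h]
  · rcases H' hB hC hbB hcC hpB hpC hbp hcp with h | h
    exacts [hbC h, hcB h]
  · rcases H hB hC hbB hcC hpB hpC hbp hcp with h | h
    exacts [hbC h, hcB h]
  · rcases H' hA hC haA hcC hpA hpC hap hcp with h | h
    exacts [haC h, hcA h]
  · rcases H' hA hB haA hbB hpA hpB hap hbp with h | h
    exacts [haB h, hbA h]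
  · rcases H' hA hB haA hbB hpA hpB hap hbp with h | h
    exacts [haB h, hbA h]
end

section
/- If I₁, I₂, I₃ are convex subsets (intervals) of ℝ with nonempty common intersection I₁ ∩ I₂ ∩ I₃ ≠ ∅, then at least one of the three intervals is contained in the union of the other two. -/
lemma same_side_left {A B : Set ℝ} (hA : A.OrdConnected) (hB : B.OrdConnected)
    {p a b : ℝ} (hpA : p ∈ A) (hpB : p ∈ B) (ha : a ∈ A) (hb : b ∈ B)
    (hap : a ≤ p) (hbp : b ≤ p) : b ∈ A ∨ a ∈ B := by
  rcases le_total a b with h | h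
  · exact Or.inl (hA.out ha hpA ⟨h, hbp⟩)
  · exact Or.inr (hB.out hb hpB ⟨h, hap⟩)

lemma same_side_right {A B : Set ℝ} (hA : A.OrdConnected) (hB : B.OrdConnected)
    {p a b : ℝ} (hpA : p ∈ A) (hpB : p ∈ B) (ha : a ∈ A) (hb : b ∈ B)
    (hap : p ≤ a) (hbp : p ≤ b) : b ∈ A ∨ a ∈ B := by
  rcases le_total a b with h | h
  · exact Or.inr (hB.out hpB hb ⟨hap, h⟩)
  · exact Or.inl (hA.out hpA ha ⟨hbp, h⟩)

lemma resolve {A B : Set ℝ} (hA : A.OrdConnected) (hB : B.OrdConnected)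
    {p a b : ℝ} (hpA : p ∈ A) (hpB : p ∈ B) (ha : a ∈ A) (hb : b ∈ B)
    (h : (a ≤ p ∧ b ≤ p) ∨ (p ≤ a ∧ p ≤ b)) : b ∈ A ∨ a ∈ B := by
  rcases h with ⟨h1, h2⟩ | ⟨h1, h2⟩
  · exact same_side_left hA hB hpA hpB ha hb h1 h2
  · exact same_side_right hA hB hpA hpB ha hb h1 h2

theorem interval_covered_by_others (I₁ I₂ I₃ : Set ℝ)
    (h₁ : Convex ℝ I₁) (h₂ : Convex ℝ I₂) (h₃ : Convex ℝ I₃)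
    (hne : (I₁ ∩ I₂ ∩ I₃).Nonempty) :
    I₁ ⊆ I₂ ∪ I₃ ∨ I₂ ⊆ I₁ ∪ I₃ ∨ I₃ ⊆ I₁ ∪ I₂ := by
  obtain ⟨p, ⟨hp1, hp2⟩, hp3⟩ := hne
  by_contra hc
  push_neg at hc
  obtain ⟨hn1, hn2, hn3⟩ := hc
  obtain ⟨x₁, hx1, hx1'⟩ := Set.not_subset.mp hn1
  obtain ⟨x₂, hx2, hx2'⟩ := Set.not_subset.mp hn2
  obtain ⟨x₃, hx3, hx3'⟩ := Set.not_subset.mp hn3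
  simp only [Set.mem_union, not_or] at hx1' hx2' hx3'
  have o₁ := h₁.ordConnected
  have o₂ := h₂.ordConnected
  have o₃ := h₃.ordConnected
  rcases le_total x₁ p with s1 | s1 <;> rcases le_total x₂ p with s2 | s2 <;>
    rcases le_total x₃ p with s3 | s3
  · rcases resolve o₁ o₂ hp1 hp2 hx1 hx2 (Or.inl ⟨s1, s2⟩) with h | h
    exacts [hx2'.1 h, hx1'.1 h]
  · rcases resolve o₁ o₂ hp1 hp2 hx1 hx2 (Or.inl ⟨s1, s2⟩) with h | h
    exacts [hx2'.1 h, hx1'.1 h]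
  · rcases resolve o₁ o₃ hp1 hp3 hx1 hx3 (Or.inl ⟨s1, s3⟩) with h | h
    exacts [hx3'.1 h, hx1'.2 h]
  · rcases resolve o₂ o₃ hp2 hp3 hx2 hx3 (Or.inr ⟨s2, s3⟩) with h | h
    exacts [hx3'.2 h, hx2'.2 h]
  · rcases resolve o₂ o₃ hp2 hp3 hx2 hx3 (Or.inl ⟨s2, s3⟩) with h | h
    exacts [hx3'.2 h, hx2'.2 h]
  · rcases resolve o₁ o₃ hp1 hp3 hx1 hx3 (Or.inr ⟨s1, s3⟩) with h | h
    exacts [hx3'.1 h, hx1'.2 h]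
  · rcases resolve o₁ o₂ hp1 hp2 hx1 hx2 (Or.inr ⟨s1, s2⟩) with h | h
    exacts [hx2'.1 h, hx1'.1 h]
  · rcases resolve o₁ o₂ hp1 hp2 hx1 hx2 (Or.inr ⟨s1, s2⟩) with h | h
    exacts [hx2'.1 h, hx1'.1 h]
end
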